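/- Let G be a finite simple graph with at least one vertex and let Gᵉ be its higher-dimensional context extension. Then the map sending each state p on Gᵉ to its restriction p|_{V(G)} is a bijection from the set of states on Gᵉ onto the set of substates on G; in particular, every substate on G extends uniquely to a state on Gᵉ. -/

import Mathlib

open Finset

/-- A maximal clique of a simple graph, as a finite set of vertices. -/
def IsMaxClique {V : Type*} (G : SimpleGraph V) (C : Finset V) : Prop :=
  G.IsClique (C : Set V) ∧ ∀ D : Finset V, G.IsClique (D : Set V) → C ⊆ D → D = C

/-- The finite set of all maximal cliques of a finite simple graph. -/
noncomputable def maxCliques {V : Type*} [Fintype V] (G : SimpleGraph V) :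
    Finset (Finset V) := by
  classical exact Finset.univ.filter (fun C => IsMaxClique G C)

/-- `c(G)`: the total number of maximal cliques of `G`. -/
noncomputable def numMaxCliques {V : Type*} [Fintype V] (G : SimpleGraph V) : ℕ :=
  (maxCliques G).card

/-- `c_G(i)`: the number of maximal cliques of `G` containing the vertex `i`. -/
noncomputable def cG {V : Type*} [Fintype V] (G : SimpleGraph V) (i : V) : ℕ := by
  classical exact ((maxCliques G).filter (fun C => i ∈ C)).card

/-- A state on a finite simple graph: values in `[0,1]` summing to `1` on each
maximal clique. -/
def IsGraphState {V : Type*} [Fintype V] (G : SimpleGraph V) (p : V → ℝ) : Prop :=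
  (∀ i, 0 ≤ p i ∧ p i ≤ 1) ∧ ∀ C ∈ maxCliques G, ∑ i ∈ C, p i = 1

/-- An independent set of a simple graph: pairwise non-adjacent vertices. -/
def IsIndep {V : Type*} (G : SimpleGraph V) (I : Finset V) : Prop :=
  ∀ i ∈ I, ∀ j ∈ I, i ≠ j → ¬ G.Adj i j

/-- `α(G; w)`: the maximum weight of an independent set of `G` for the weight `w`. -/
noncomputable def alphaW {V : Type*} [Fintype V] (G : SimpleGraph V) (w : V → ℝ) : ℝ :=
  sSup { x : ℝ | ∃ I : Finset V, IsIndep G I ∧ x = ∑ i ∈ I, w i }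

/-- The higher-dimensional context extension `Gᵉ` of `G`: one new vertex is added for
each maximal clique of `G`, adjacent exactly to the vertices of that clique; the new
vertices are pairwise non-adjacent and the old adjacency is kept. -/
noncomputable def contextExtension {V : Type*} [Fintype V] (G : SimpleGraph V) :
    SimpleGraph (V ⊕ {C : Finset V // C ∈ maxCliques G}) where
  Adj x y :=
    match x, y with
    | Sum.inl a, Sum.inl b => G.Adj a b
    | Sum.inl a, Sum.inr C => a ∈ (C : Finset V)
    | Sum.inr C, Sum.inl a => a ∈ (C : Finset V)
    | Sum.inr _, Sum.inr _ => False
  symm := by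
    constructor
    rintro (a | C) (b | D) h
    · exact G.adj_symm h
    · exact h
    · exact h
    · exact h
  loopless := by
    constructor
    rintro (a | C) h
    · exact G.irrefl h
    · exact h

/-- A substate on a finite simple graph: values in `[0,1]` summing to at most `1` on
each maximal clique. -/
def IsSubstate {V : Type*} [Fintype V] (G : SimpleGraph V) (p : V → ℝ) : Prop :=
  (∀ i, 0 ≤ p i ∧ p i ≤ 1) ∧ ∀ C ∈ maxCliques G, ∑ i ∈ C, p i ≤ 1


section Aux

variable {V : Type*} [Fintype V]

open Classical in
lemma exists_maxClique_supset (G : SimpleGraph V) {A : Finset V}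
    (hA : G.IsClique (A : Set V)) : ∃ C ∈ maxCliques G, A ⊆ C := by
  classical
  set S : Finset (Finset V) :=
    Finset.univ.filter (fun D => G.IsClique (D : Set V) ∧ A ⊆ D) with hS
  have hmemS : ∀ D : Finset V, D ∈ S ↔ G.IsClique (D : Set V) ∧ A ⊆ D := by
    intro D; simp [hS]
  have hne : S.Nonempty := ⟨A, (hmemS A).2 ⟨hA, subset_rfl⟩⟩
  obtain ⟨C, hCS, hmax⟩ := S.exists_max_image Finset.card hne
  obtain ⟨hCcl, hAC⟩ := (hmemS C).1 hCS
  refine ⟨C, ?_, hAC⟩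
  simp only [maxCliques, Finset.mem_filter, Finset.mem_univ, true_and]
  refine ⟨hCcl, fun D hD hCD => ?_⟩
  have hDS : D ∈ S := (hmemS D).2 ⟨hD, hAC.trans hCD⟩
  exact (Finset.eq_of_subset_of_card_le hCD (hmax D hDS)).symm

open Classical in
/-- The maximal clique of `Gᵉ` associated to a maximal clique `C` of `G`. -/
noncomputable def extClique (G : SimpleGraph V) (C : {C : Finset V // C ∈ maxCliques G}) :
    Finset (V ⊕ {C : Finset V // C ∈ maxCliques G}) :=
  insert (Sum.inr C) ((C : Finset V).image Sum.inl)

lemma mem_maxCliques_iff (G : SimpleGraph V) (C : Finset V) :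
    C ∈ maxCliques G ↔ IsMaxClique G C := by
  simp [maxCliques]

lemma extClique_isClique (G : SimpleGraph V) (C : {C : Finset V // C ∈ maxCliques G}) :
    (contextExtension G).IsClique ((extClique G C : Finset _) : Set _) := by
  classical
  have hCcl : G.IsClique ((C : Finset V) : Set V) :=
    ((mem_maxCliques_iff G C).1 C.2).1
  intro x hx y hy hxy
  simp only [extClique, Finset.coe_insert, Set.mem_insert_iff, Finset.coe_image,
    Set.mem_image, Finset.mem_coe] at hx hy
  rcases hx with rfl | ⟨a, ha, rfl⟩ <;> rcases hy with rfl | ⟨b, hb, rfl⟩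
  · exact absurd rfl hxy
  · exact hb
  · exact ha
  · exact hCcl ha hb (by simpa using hxy)

lemma sum_extClique (G : SimpleGraph V) (C : {C : Finset V // C ∈ maxCliques G})
    (p : (V ⊕ {C : Finset V // C ∈ maxCliques G}) → ℝ) :
    ∑ x ∈ extClique G C, p x = p (Sum.inr C) + ∑ i ∈ (C : Finset V), p (Sum.inl i) := by
  classical
  rw [extClique, Finset.sum_insert (by simp), Finset.sum_image (by simp)]

lemma extClique_mem (G : SimpleGraph V) (C : {C : Finset V // C ∈ maxCliques G}) :
    extClique G C ∈ maxCliques (contextExtension G) := by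
  classical
  rw [mem_maxCliques_iff]
  refine ⟨extClique_isClique G C, fun D hD hsub => ?_⟩
  apply Finset.Subset.antisymm _ hsub
  intro x hx
  have hinr : Sum.inr C ∈ D := hsub (by simp [extClique])
  rcases x with a | C'
  · have hadj : (contextExtension G).Adj (Sum.inl a) (Sum.inr C) :=
      hD hx hinr (by simp)
    have : a ∈ (C : Finset V) := hadj
    simp [extClique, this]
  · by_cases h : C' = C
    · simp [extClique, h]
    · exact absurd (hD hx hinr (by simp [h])) (by simp [contextExtension])

lemma maxCliques_ext (G : SimpleGraph V) (D : Finset (V ⊕ {C : Finset V // C ∈ maxCliques G})) :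
    D ∈ maxCliques (contextExtension G) ↔
      ∃ C : {C : Finset V // C ∈ maxCliques G}, D = extClique G C := by
  classical
  constructor
  · intro hD
    obtain ⟨hDcl, hDmax⟩ := (mem_maxCliques_iff _ D).1 hD
    by_cases hr : ∃ C' : {C : Finset V // C ∈ maxCliques G}, Sum.inr C' ∈ D
    · obtain ⟨C', hC'⟩ := hr
      refine ⟨C', ?_⟩
      have hsub : D ⊆ extClique G C' := by
        intro x hx
        rcases x with a | C''
        · have hadj : (contextExtension G).Adj (Sum.inl a) (Sum.inr C') :=
            hDcl hx hC' (by simp)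
          have : a ∈ (C' : Finset V) := hadj
          simp [extClique, this]
        · by_cases h : C'' = C'
          · simp [extClique, h]
          · exact absurd (hDcl hx hC' (by simp [h])) (by simp [contextExtension])
      exact (hDmax _ (extClique_isClique G C') hsub).symm
    · exfalso
      push_neg at hr
      set A : Finset V := Finset.univ.filter (fun a => Sum.inl a ∈ D) with hA
      have hAcl : G.IsClique (A : Set V) := by
        intro a ha b hb hab
        have ha' : Sum.inl a ∈ D := by simpa [hA] using ha
        have hb' : Sum.inl b ∈ D := by simpa [hA] using hb
        exact hDcl ha' hb' (by simp [hab])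
      obtain ⟨C, hC, hAC⟩ := exists_maxClique_supset G hAcl
      have hsub : D ⊆ extClique G ⟨C, hC⟩ := by
        intro x hx
        rcases x with a | C''
        · have : a ∈ A := by simp [hA, hx]
          have : a ∈ C := hAC this
          simp [extClique, this]
        · exact absurd hx (hr C'')
      have := hDmax _ (extClique_isClique G ⟨C, hC⟩) hsub
      have : Sum.inr (⟨C, hC⟩ : {C : Finset V // C ∈ maxCliques G}) ∈ D := by
        rw [← this]; simp [extClique]
      exact hr _ this
  · rintro ⟨C, rfl⟩
    exact extClique_mem G C

end Aux

/-- **Restriction is a bijection between states on `Gᵉ` and substates on `G`**: the map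
sending a state `p` on the higher-dimensional context extension `Gᵉ` to its restriction
to the vertices of `G` is a bijection from the states on `Gᵉ` onto the substates on `G`;
in particular every substate on `G` extends uniquely to a state on `Gᵉ`. -/
theorem states_contextExtension_bijOn_substates {V : Type*} [Fintype V] [Nonempty V]
    (G : SimpleGraph V) :
    Set.BijOn (fun p : (V ⊕ {C : Finset V // C ∈ maxCliques G}) → ℝ => p ∘ Sum.inl)
      {p | IsGraphState (contextExtension G) p}
      {q | IsSubstate G q} := by
  classical
  refine ⟨?_, ?_, ?_⟩
  · -- MapsTo
    intro p hp
    obtain ⟨hbd, hsum⟩ := hp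
    refine ⟨fun i => hbd (Sum.inl i), fun C hC => ?_⟩
    have h1 := hsum _ (extClique_mem G ⟨C, hC⟩)
    rw [sum_extClique] at h1
    have h0 := (hbd (Sum.inr ⟨C, hC⟩)).1
    simp only [Function.comp]
    linarith
  · -- InjOn
    intro p hp q hq hpq
    obtain ⟨hpbd, hpsum⟩ := hp
    obtain ⟨hqbd, hqsum⟩ := hq
    funext x
    rcases x with a | C
    · exact congrFun hpq a
    · have h1 := hpsum _ (extClique_mem G C)
      have h2 := hqsum _ (extClique_mem G C)
      rw [sum_extClique] at h1 h2
      have hsame : ∑ i ∈ (C : Finset V), p (Sum.inl i) =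
          ∑ i ∈ (C : Finset V), q (Sum.inl i) :=
        Finset.sum_congr rfl (fun i _ => congrFun hpq i)
      linarith
  · -- SurjOn
    intro q hq
    obtain ⟨hbd, hsum⟩ := hq
    refine ⟨Sum.elim q (fun C => 1 - ∑ i ∈ (C : Finset V), q i), ⟨?_, ?_⟩, ?_⟩
    · rintro (a | C)
      · exact hbd a
      · constructor
        · simpa using hsum _ C.2
        · have : (0:ℝ) ≤ ∑ i ∈ (C : Finset V), q i :=
            Finset.sum_nonneg (fun i _ => (hbd i).1)
          simpa using this
    · intro D hD
      obtain ⟨C, rfl⟩ := (maxCliques_ext G D).1 hD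
      rw [sum_extClique]
      simp
    · rfl
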